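/- Let T : {0,1}* → {0,1}* be an aperiodic morphism. Then T, extended to infinite binary words, is either order-preserving on infinite words or order-reversing on infinite words. -/

import Mathlib

/-- Apply a binary morphism to a finite word. -/
def applyM (T : Bool → List Bool) (w : List Bool) : List Bool := (w.map T).flatten

/-- Strict lexicographic order on finite binary words (false < true). -/
def LexLt (u v : List Bool) : Prop := List.Lex (· < ·) u v

/-- Lexicographic order: u ≤ v iff u is a prefix of v or they differ with a smaller letter. -/
def LexLe (u v : List Bool) : Prop := List.Lex (· < ·) u v ∨ u = v

/-- Image of an infinite word under a morphism (letterwise, concatenated). -/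
def applyInf (T : Bool → List Bool) (u : ℕ → Bool) : ℕ → Bool :=
  fun n => (applyM T ((List.range (n + 1)).map u)).getD n false

/-- Strict lexicographic order on infinite binary words (false < true). -/
def InfLt (u v : ℕ → Bool) : Prop := ∃ n, (∀ i < n, u i = v i) ∧ u n < v n

/-- n-fold concatenation power of a word. -/
def wpow {α : Type*} (x : List α) (n : ℕ) : List α := (List.replicate n x).flatten

/-- A word is primitive if it is not a power uⁿ with n ≥ 2. -/
def PrimitiveW {α : Type*} (x : List α) : Prop := ∀ (u : List α) (n : ℕ), 2 ≤ n → x ≠ wpow u n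

/-- A binary morphism is periodic if T(0), T(1) are powers of a common word. -/
def PeriodicM (T : Bool → List Bool) : Prop :=
  ∃ (t : List Bool) (i j : ℕ), T false = wpow t i ∧ T true = wpow t j

/-- The i-th shift of an infinite word. -/
def shiftW {α : Type*} (ω : ℕ → α) (i : ℕ) : ℕ → α := fun n => ω (i + n)

/-- The word w occurs in ω at position i. -/
def OccursAt {α : Type*} (ω : ℕ → α) (w : List α) (i : ℕ) : Prop :=
  ∀ k < w.length, w[k]? = some (ω (i + k))

/-- w is a factor of ω. -/
def IsFactor {α : Type*} (ω : ℕ → α) (w : List α) : Prop := ∃ i, OccursAt ω w i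

/-- Occurrences at i and i' of length-n factors induce the same permutation:
the relative lexicographic order of the shifts starting inside the occurrences agree. -/
def SamePermAt (ω : ℕ → Bool) (n i i' : ℕ) : Prop :=
  ∀ k < n, ∀ l < n,
    (InfLt (shiftW ω (i + k)) (shiftW ω (i + l)) ↔ InfLt (shiftW ω (i' + k)) (shiftW ω (i' + l)))

/-- Two factors of ω have the same permutation: some occurrences induce equal patterns. -/
def SamePerm (ω : ℕ → Bool) (u v : List Bool) : Prop :=
  ∃ i i', OccursAt ω u i ∧ OccursAt ω v i' ∧ u.length = v.length ∧
    SamePermAt ω u.length i i'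

/-- w is a right special factor of ω. -/
def RightSpecial (ω : ℕ → Bool) (w : List Bool) : Prop :=
  IsFactor ω (w ++ [false]) ∧ IsFactor ω (w ++ [true])

/-- w is a left special factor of ω. -/
def LeftSpecial (ω : ℕ → Bool) (w : List Bool) : Prop :=
  IsFactor ω (false :: w) ∧ IsFactor ω (true :: w)

/-- An infinite word is aperiodic: no two distinct shifts are equal. -/
def AperiodicW {α : Type*} (ω : ℕ → α) : Prop := ∀ i j : ℕ, i ≠ j → shiftW ω i ≠ shiftW ω j

/-- A finite word has period q. -/
def HasPeriod {α : Type*} (w : List α) (q : ℕ) : Prop :=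
  ∀ i, i + q < w.length → w[i]? = w[i + q]?

/-- Uniform recurrence: every long enough factor contains every short factor. -/
def UniformlyRecurrent {α : Type*} (s : ℕ → α) : Prop :=
  ∀ ℓ : ℕ, ∃ L : ℕ, ∀ w z : List α, IsFactor s w → w.length = L →
    IsFactor s z → z.length = ℓ → z <:+: w

/-- Not eventually periodic. -/
def NotEventuallyPeriodic {α : Type*} (s : ℕ → α) : Prop :=
  ¬ ∃ p : ℕ, 1 ≤ p ∧ ∃ N : ℕ, ∀ n ≥ N, s (n + p) = s n

/-- Concatenation of a finite word with an infinite word. -/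
def catInf (w : List Bool) (u : ℕ → Bool) : ℕ → Bool :=
  fun n => if h : n < w.length then w.get ⟨n, h⟩ else u (n - w.length)

-- ============ basic lemmas ============

lemma catInf_lt {w : List Bool} {u : ℕ → Bool} {n : ℕ} (h : n < w.length) :
    catInf w u n = w.getD n false := by
  simp [catInf, h, List.getD_eq_getElem _ _ h]

lemma catInf_ge {w : List Bool} {u : ℕ → Bool} {n : ℕ} (h : w.length ≤ n) :
    catInf w u n = u (n - w.length) := by
  simp [catInf, Nat.not_lt.mpr h]

lemma applyM_append (T : Bool → List Bool) (u v : List Bool) :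
    applyM T (u ++ v) = applyM T u ++ applyM T v := by
  simp [applyM]

lemma wpow_add {α : Type*} (t : List α) (i j : ℕ) :
    wpow t (i + j) = wpow t i ++ wpow t j := by
  rw [wpow, List.replicate_add, List.flatten_append]; rfl

-- prefix of an infinite word
def pfx (x : ℕ → Bool) (m : ℕ) : List Bool := (List.range m).map x

lemma pfx_add (x : ℕ → Bool) (m j : ℕ) :
    pfx x (m + j) = pfx x m ++ pfx (shiftW x m) j := by
  simp only [pfx, List.range_add, List.map_append, List.map_map]
  rfl

lemma length_img {T : Bool → List Bool} (hf : T false ≠ []) (ht : T true ≠ [])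
    (x : ℕ → Bool) (m : ℕ) : m ≤ (applyM T (pfx x m)).length := by
  induction m with
  | zero => simp
  | succ m ih =>
    have : pfx x (m + 1) = pfx x m ++ [x m] := by
      simp [pfx, List.range_succ]
    rw [this, applyM_append]
    have h1 : 1 ≤ (applyM T [x m]).length := by
      cases hxm : x m <;> simp [applyM] <;>
        [exact List.length_pos_iff.mpr hf; exact List.length_pos_iff.mpr ht]
    simp only [List.length_append]
    omega

lemma img_split {T : Bool → List Bool} (x : ℕ → Bool) (m j : ℕ) :
    applyM T (pfx x (m + j)) = applyM T (pfx x m) ++ applyM T (pfx (shiftW x m) j) := by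
  rw [pfx_add, applyM_append]

lemma applyInf_val {T : Bool → List Bool} (hf : T false ≠ []) (ht : T true ≠ [])
    {x : ℕ → Bool} {m k : ℕ} (h : k < (applyM T (pfx x m)).length) :
    applyInf T x k = (applyM T (pfx x m)).getD k false := by
  have hdef : applyInf T x k = (applyM T (pfx x (k + 1))).getD k false := rfl
  rcases le_total m (k + 1) with h' | h'
  · obtain ⟨j, hj⟩ := Nat.exists_eq_add_of_le h'
    rw [hdef, hj, img_split x m j, List.getD_append _ _ _ _ h]
  · obtain ⟨j, hj⟩ := Nat.exists_eq_add_of_le h'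
    have hk : k < (applyM T (pfx x (k + 1))).length := length_img hf ht x (k + 1)
    rw [hdef, hj, img_split x (k+1) j, List.getD_append _ _ _ _ hk]

lemma applyInf_split {T : Bool → List Bool} (hf : T false ≠ []) (ht : T true ≠ [])
    (x : ℕ → Bool) (m : ℕ) :
    applyInf T x = catInf (applyM T (pfx x m)) (applyInf T (shiftW x m)) := by
  funext k
  set L := (applyM T (pfx x m)).length with hL
  by_cases h : k < L
  · rw [catInf_lt h, applyInf_val hf ht h]
  · push_neg at h
    rw [catInf_ge h]
    have hdef : applyInf T (shiftW x m) (k - L) =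
        (applyM T (pfx (shiftW x m) (k - L + 1))).getD (k - L) false := rfl
    have hlen : k - L < (applyM T (pfx (shiftW x m) (k - L + 1))).length :=
      length_img hf ht _ _
    have hklen : k < (applyM T (pfx x (m + (k - L + 1)))).length := by
      rw [img_split]; simp only [List.length_append]; omega
    rw [applyInf_val hf ht hklen, img_split, List.getD_append_right _ _ _ _ h, hdef]

-- ============ products ============

def IsProd (A B : List Bool) (w : ℕ → Bool) : Prop :=
  ∀ n, ∃ L : List (List Bool), (∀ x ∈ L, x = A ∨ x = B) ∧ n ≤ L.length ∧
    ∀ k < L.flatten.length, w k = L.flatten.getD k false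

lemma isProd_symm {A B : List Bool} {w : ℕ → Bool} (h : IsProd A B w) : IsProd B A w := by
  intro n
  obtain ⟨L, h1, h2, h3⟩ := h n
  exact ⟨L, fun x hx => (h1 x hx).symm, h2, h3⟩

lemma isProd_applyInf {T : Bool → List Bool} (hf : T false ≠ []) (ht : T true ≠ [])
    (x : ℕ → Bool) : IsProd (T false) (T true) (applyInf T x) := by
  intro n
  refine ⟨(pfx x n).map T, ?_, ?_, ?_⟩
  · intro y hy
    obtain ⟨c, _, rfl⟩ := List.mem_map.mp hy
    cases c <;> [exact Or.inl rfl; exact Or.inr rfl]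
  · simp [pfx]
  · intro k hk
    exact applyInf_val hf ht hk

lemma flatten_flatMap_eq {α : Type*} (f : List α → List (List α)) :
    ∀ L : List (List α), (∀ x ∈ L, (f x).flatten = x) → (L.flatMap f).flatten = L.flatten := by
  intro L
  induction L with
  | nil => simp
  | cons a l ih =>
    intro h
    simp only [List.flatMap_cons, List.flatten_append, List.flatten_cons]
    rw [h a (by simp), ih (fun x hx => h x (by simp [hx]))]

lemma length_le_flatMap {α β : Type*} (f : α → List β) :
    ∀ L : List α, (∀ x ∈ L, 1 ≤ (f x).length) → L.length ≤ (L.flatMap f).length := by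
  intro L
  induction L with
  | nil => simp
  | cons a l ih =>
    intro h
    simp only [List.flatMap_cons, List.length_append, List.length_cons]
    have h1 := h a (by simp)
    have h2 := ih (fun x hx => h x (by simp [hx]))
    omega

lemma isProd_mono {A B A' B' : List Bool} {w : ℕ → Bool} (f : List Bool → List (List Bool))
    (hfA : (f A).flatten = A) (hfB : (f B).flatten = B)
    (hlA : 1 ≤ (f A).length) (hlB : 1 ≤ (f B).length)
    (hmA : ∀ y ∈ f A, y = A' ∨ y = B') (hmB : ∀ y ∈ f B, y = A' ∨ y = B')
    (h : IsProd A B w) : IsProd A' B' w := by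
  intro n
  obtain ⟨L, hmem, hlen, hpre⟩ := h n
  have hflat : ∀ x ∈ L, (f x).flatten = x := by
    intro x hx; rcases hmem x hx with rfl | rfl <;> assumption
  have hl1 : ∀ x ∈ L, 1 ≤ (f x).length := by
    intro x hx; rcases hmem x hx with rfl | rfl <;> assumption
  refine ⟨L.flatMap f, ?_, ?_, ?_⟩
  · intro y hy
    obtain ⟨x, hx, hyx⟩ := List.mem_flatMap.mp hy
    rcases hmem x hx with rfl | rfl
    · exact hmA y hyx
    · exact hmB y hyx
  · exact hlen.trans (length_le_flatMap f L hl1)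
  · rw [flatten_flatMap_eq f L hflat]
    exact hpre

lemma isProd_head {A B D : List Bool} {w : ℕ → Bool} (hD : A ++ D = B)
    (h : IsProd A B w) : ∀ m < A.length, w m = A.getD m false := by
  intro m hm
  obtain ⟨L, hmem, hlen, hpre⟩ := h 1
  match L, hlen with
  | X :: L₂, _ =>
    have hX := hmem X (by simp)
    have hXA : ∀ k < A.length, X.getD k false = A.getD k false := by
      intro k hk
      rcases hX with h' | h'
      · rw [h']
      · rw [h', ← hD, List.getD_append _ _ _ _ hk]
    have hXlen : A.length ≤ X.length := by
      rcases hX with h' | h'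
      · rw [h']
      · rw [h', ← hD]; simp
    have hflen : m < (X :: L₂).flatten.length := by
      simp only [List.flatten_cons, List.length_append]; omega
    rw [hpre m hflen, List.flatten_cons,
      List.getD_append _ _ _ _ (lt_of_lt_of_le hm hXlen), hXA m hm]

lemma isProd_tail {A B D : List Bool} {w : ℕ → Bool} (hD : A ++ D = B) (hDne : D ≠ [])
    (h : IsProd A B w) : IsProd A D (shiftW w A.length) := by
  have hBA : B ≠ A := by
    intro h'
    apply hDne
    have : A ++ D = A ++ [] := by rw [hD, h']; simp
    exact List.append_cancel_left this
  set g : List Bool → List (List Bool) := fun x => if x = A then [A] else [A, D] with hg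
  have hgflat : ∀ x, x = A ∨ x = B → (g x).flatten = x := by
    rintro x (rfl | rfl)
    · simp [hg]
    · simp [hg, hBA, hD]
  have hgmem : ∀ x, x = A ∨ x = B → ∀ y ∈ g x, y = A ∨ y = D := by
    rintro x (rfl | rfl) y hy
    · simp [hg] at hy; exact Or.inl hy
    · simp [hg, hBA] at hy; exact hy
  have hglen : ∀ x, 1 ≤ (g x).length := by
    intro x; by_cases h' : x = A <;> simp [hg, h']
  intro n
  obtain ⟨L, hmem, hlen, hpre⟩ := h (n + 1)
  match L, hlen with
  | X :: L₂, hlen =>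
    have hmem₂ : ∀ x ∈ L₂, x = A ∨ x = B := fun x hx => hmem x (by simp [hx])
    have hflat₂ : (L₂.flatMap g).flatten = L₂.flatten :=
      flatten_flatMap_eq g L₂ (fun x hx => hgflat x (hmem₂ x hx))
    have hlen₂ : L₂.length ≤ (L₂.flatMap g).length :=
      length_le_flatMap g L₂ (fun x _ => hglen x)
    have hmemg : ∀ y ∈ L₂.flatMap g, y = A ∨ y = D := by
      intro y hy
      obtain ⟨x, hx, hyx⟩ := List.mem_flatMap.mp hy
      exact hgmem x (hmem₂ x hx) y hyx
    -- choose L' and prove flatten L = A ++ flatten L'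
    obtain ⟨L', hm', hl', hf'⟩ :
        ∃ L' : List (List Bool), (∀ y ∈ L', y = A ∨ y = D) ∧
          L₂.length ≤ L'.length ∧ (X :: L₂).flatten = A ++ L'.flatten := by
      rcases hmem X (by simp) with h' | h'
      · exact ⟨L₂.flatMap g, hmemg, hlen₂, by
          simp only [List.flatten_cons, hflat₂, h']⟩
      · refine ⟨D :: L₂.flatMap g, ?_, by simp only [List.length_cons]; omega, ?_⟩
        · intro y hy
          rcases List.mem_cons.mp hy with rfl | hy'
          · exact Or.inr rfl
          · exact hmemg y hy'
        · simp only [List.flatten_cons, hflat₂, h', ← hD, List.append_assoc]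
    refine ⟨L', hm', by simp at hlen; omega, ?_⟩
    intro k hk
    have hklen : A.length + k < (X :: L₂).flatten.length := by
      rw [hf', List.length_append]; omega
    have : shiftW w A.length k = w (A.length + k) := rfl
    rw [this, hpre _ hklen, hf',
      List.getD_append_right _ _ _ _ (by omega : A.length ≤ A.length + k),
      Nat.add_sub_cancel_left]

lemma prefix_of_getD {A B : List Bool} (hlen : A.length ≤ B.length)
    (h : ∀ q < A.length, A.getD q false = B.getD q false) : A <+: B := by
  have : A = B.take A.length := by
    apply List.ext_getElem (by simp [hlen])
    intro i h1 h2
    have h3 := h i h1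
    rw [List.getD_eq_getElem _ _ h1, List.getD_eq_getElem _ _ (lt_of_lt_of_le h1 hlen)] at h3
    simpa using h3
  rw [this]
  exact List.take_prefix _ _

lemma comm_wpow : ∀ N : ℕ, ∀ A B : List Bool, A.length + B.length ≤ N →
    A ++ B = B ++ A → ∃ (t : List Bool) (i j : ℕ), A = wpow t i ∧ B = wpow t j := by
  intro N
  induction N with
  | zero =>
    intro A B hN _
    have hA : A = [] := List.length_eq_zero_iff.mp (by omega)
    have hB : B = [] := List.length_eq_zero_iff.mp (by omega)
    exact ⟨[], 0, 0, by simp [hA, wpow], by simp [hB, wpow]⟩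
  | succ N ih =>
    intro A B hN hcomm
    rcases eq_or_ne A [] with rfl | hA
    · exact ⟨B, 0, 1, by simp [wpow], by simp [wpow]⟩
    rcases eq_or_ne B [] with rfl | hB
    · exact ⟨A, 1, 0, by simp [wpow], by simp [wpow]⟩
    have hA1 : 1 ≤ A.length := List.length_pos_iff.mpr hA
    have hB1 : 1 ≤ B.length := List.length_pos_iff.mpr hB
    rcases le_total A.length B.length with hle | hle
    · have hpre : A <+: B := by
        have h1 : A = (A ++ B).take A.length := (List.take_left : (A ++ B).take A.length = A).symm
        rw [hcomm] at h1
        rw [List.take_append, Nat.sub_eq_zero_of_le hle] at h1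
        simp at h1
        rw [h1]
        exact List.take_prefix _ _
      obtain ⟨C, hC⟩ := hpre
      have hAC : A ++ C = C ++ A := by
        have h2 : A ++ (A ++ C) = A ++ (C ++ A) := by
          rw [hC, hcomm, ← hC, List.append_assoc]
        exact List.append_cancel_left h2
      have hsize : A.length + C.length ≤ N := by
        have := congrArg List.length hC
        simp at this
        omega
      obtain ⟨t, i, j, hti, htj⟩ := ih A C hsize hAC
      exact ⟨t, i, i + j, hti, by rw [← hC, wpow_add, hti, htj]⟩
    · have hpre : B <+: A := by
        have h1 : B = (B ++ A).take B.length := (List.take_left : (B ++ A).take B.length = B).symm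
        rw [← hcomm] at h1
        rw [List.take_append, Nat.sub_eq_zero_of_le hle] at h1
        simp at h1
        rw [h1]
        exact List.take_prefix _ _
      obtain ⟨C, hC⟩ := hpre
      have hBC : B ++ C = C ++ B := by
        have h2 : B ++ (B ++ C) = B ++ (C ++ B) := by
          rw [hC, ← hcomm, ← hC, List.append_assoc]
        exact List.append_cancel_left h2
      have hsize : B.length + C.length ≤ N := by
        have := congrArg List.length hC
        simp at this
        omega
      obtain ⟨t, i, j, hti, htj⟩ := ih B C hsize hBC
      exact ⟨t, i + j, i, by rw [← hC, wpow_add, hti, htj], hti⟩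

lemma oneSide : ∀ N : ℕ, ∀ A B : List Bool, A.length + B.length ≤ N → A ≠ [] → B ≠ [] →
    ∀ r : ℕ, (∀ k < r, (A ++ B).getD k false = (B ++ A).getD k false) →
    (A ++ B).getD r false ≠ (B ++ A).getD r false →
    ∀ w, IsProd A B w → ∀ k ≤ r, catInf A w k = (A ++ B).getD k false := by
  intro N
  induction N with
  | zero =>
    intro A B hN hA _
    exact absurd (List.length_eq_zero_iff.mp (by omega)) hA
  | succ N ih =>
    intro A B hN hA hB r hr1 hr2 w hw k hk
    have hA1 : 1 ≤ A.length := List.length_pos_iff.mpr hA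
    have hB1 : 1 ≤ B.length := List.length_pos_iff.mpr hB
    by_cases hAB : A <+: B
    · obtain ⟨D, hD⟩ := hAB
      have hDne : D ≠ [] := by
        rintro rfl
        simp at hD
        exact hr2 (by rw [hD])
      have hle : A.length ≤ B.length := by rw [← hD]; simp
      have hrA : A.length ≤ r := by
        by_contra hcon
        push_neg at hcon
        apply hr2
        rw [List.getD_append _ _ _ _ hcon,
          List.getD_append _ _ _ _ (lt_of_lt_of_le hcon hle),
          ← hD, List.getD_append _ _ _ _ hcon]
      have hABr : ∀ m, (A ++ B).getD (A.length + m) false = (A ++ D).getD m false := by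
        intro m
        rw [← hD, List.getD_append_right _ _ _ _ (by omega), Nat.add_sub_cancel_left]
      have hBAr : ∀ m, (B ++ A).getD (A.length + m) false = (D ++ A).getD m false := by
        intro m
        rw [← hD, List.append_assoc,
          List.getD_append_right _ _ _ _ (by omega), Nat.add_sub_cancel_left]
      have hr1' : ∀ m < r - A.length, (A ++ D).getD m false = (D ++ A).getD m false := by
        intro m hm
        rw [← hABr, ← hBAr]
        exact hr1 _ (by omega)
      have hr2' : (A ++ D).getD (r - A.length) false ≠ (D ++ A).getD (r - A.length) false := by
        rw [← hABr, ← hBAr]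
        have heq : A.length + (r - A.length) = r := by omega
        rw [heq]; exact hr2
      have hsize : A.length + D.length ≤ N := by
        have := congrArg List.length hD; simp at this; omega
      have hw' : IsProd A D (shiftW w A.length) := isProd_tail hD hDne hw
      have hhead := isProd_head hD hw
      rcases lt_or_ge k A.length with hkA | hkA
      · rw [catInf_lt hkA, List.getD_append _ _ _ _ hkA]
      · have IH := ih A D hsize hA hDne (r - A.length) hr1' hr2'
          (shiftW w A.length) hw' (k - A.length) (by omega)
        rw [catInf_ge hkA]
        have hwk : w (k - A.length) = catInf A (shiftW w A.length) (k - A.length) := by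
          rcases lt_or_ge (k - A.length) A.length with h' | h'
          · rw [catInf_lt h', hhead _ h']
          · rw [catInf_ge h']
            show w (k - A.length) = w (A.length + (k - A.length - A.length))
            congr 1; omega
        rw [hwk, IH, ← hABr]
        congr 1; omega
    · by_cases hBA : B <+: A
      · obtain ⟨E, hE⟩ := hBA
        have hANeB : A ≠ B := by
          intro h'
          exact hAB (h' ▸ List.prefix_refl A)
        have hEne : E ≠ [] := by
          rintro rfl
          simp at hE
          exact hANeB hE.symm
        have hle : B.length ≤ A.length := by rw [← hE]; simp
        have hlenE : B.length + E.length = A.length := by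
          have := congrArg List.length hE; simp at this; omega
        have hrB : B.length ≤ r := by
          by_contra hcon
          push_neg at hcon
          apply hr2
          rw [List.getD_append _ _ _ _ (lt_of_lt_of_le hcon hle),
            List.getD_append _ _ _ _ hcon,
            ← hE, List.getD_append _ _ _ _ hcon]
        have hABr : ∀ m, (A ++ B).getD (B.length + m) false = (E ++ B).getD m false := by
          intro m
          rw [← hE, List.append_assoc,
            List.getD_append_right _ _ _ _ (by omega), Nat.add_sub_cancel_left]
        have hBAr : ∀ m, (B ++ A).getD (B.length + m) false = (B ++ E).getD m false := by
          intro m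
          rw [← hE, List.getD_append_right _ _ _ _ (by omega), Nat.add_sub_cancel_left]
        have hr1' : ∀ m < r - B.length, (E ++ B).getD m false = (B ++ E).getD m false := by
          intro m hm
          rw [← hABr, ← hBAr]
          exact hr1 _ (by omega)
        have hr2' : (E ++ B).getD (r - B.length) false ≠ (B ++ E).getD (r - B.length) false := by
          rw [← hABr, ← hBAr]
          have heq : B.length + (r - B.length) = r := by omega
          rw [heq]; exact hr2
        have hsize : E.length + B.length ≤ N := by omega
        have hwEB : IsProd E B w := by
          refine isProd_mono (fun x => if x = B then [B] else [B, E]) ?_ ?_ ?_ ?_ ?_ ?_ hw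
          · simp only [if_neg hANeB, List.flatten_cons, List.flatten_cons, List.flatten_nil,
              List.append_nil, hE]
          · simp
          · simp [hANeB]
          · simp
          · intro y hy
            simp only [if_neg hANeB] at hy
            rcases List.mem_cons.mp hy with rfl | hy'
            · exact Or.inr rfl
            · simp at hy'
              exact Or.inl hy'
          · intro y hy
            simp at hy
            exact Or.inr hy
        rcases lt_or_ge k B.length with hkB | hkB
        · rw [catInf_lt (lt_of_lt_of_le hkB hle), List.getD_append _ _ _ _ (lt_of_lt_of_le hkB hle)]
        · have IH := ih E B hsize hEne hB (r - B.length) hr1' hr2' w hwEB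
            (k - B.length) (by omega)
          have hstep : catInf A w k = catInf E w (k - B.length) := by
            rcases lt_or_ge k A.length with h' | h'
            · rw [catInf_lt h', catInf_lt (show k - B.length < E.length by omega),
                ← hE, List.getD_append_right _ _ _ _ hkB]
            · rw [catInf_ge h', catInf_ge (show E.length ≤ k - B.length by omega)]
              congr 1; omega
          rw [hstep, IH, ← hABr]
          congr 1; omega
      · have hq : ∃ q, q < A.length ∧ q < B.length ∧ A.getD q false ≠ B.getD q false := by
          by_contra hcon
          push_neg at hcon
          rcases le_total A.length B.length with hle | hle
          · exact hAB (prefix_of_getD hle (fun q hq => hcon q hq (lt_of_lt_of_le hq hle)))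
          · exact hBA (prefix_of_getD hle (fun q hq => (hcon q (lt_of_lt_of_le hq hle) hq).symm))
        obtain ⟨q, hqA, hqB, hqne⟩ := hq
        have hrq : r ≤ q := by
          by_contra hcon
          push_neg at hcon
          apply hqne
          have := hr1 q hcon
          rwa [List.getD_append _ _ _ _ hqA, List.getD_append _ _ _ _ hqB] at this
        have hkA : k < A.length := by omega
        rw [catInf_lt hkA, List.getD_append _ _ _ _ hkA]

lemma catInf_prepend {M : List Bool} {p q : ℕ → Bool} (h : InfLt p q) :
    InfLt (catInf M p) (catInf M q) := by
  obtain ⟨m, hag, hm⟩ := h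
  refine ⟨M.length + m, ?_, ?_⟩
  · intro i hi
    rcases lt_or_ge i M.length with h' | h'
    · rw [catInf_lt h', catInf_lt h']
    · rw [catInf_ge h', catInf_ge h']
      exact hag _ (by omega)
  · rw [catInf_ge (by omega : M.length ≤ M.length + m),
      catInf_ge (by omega : M.length ≤ M.length + m), Nat.add_sub_cancel_left]
    exact hm

lemma key (T : Bool → List Bool) (hA : T false ≠ []) (hB : T true ≠ []) (r : ℕ)
    (hr1 : ∀ k < r, (T false ++ T true).getD k false = (T true ++ T false).getD k false)
    (hr2 : (T false ++ T true).getD r false ≠ (T true ++ T false).getD r false)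
    (hsign : (T false ++ T true).getD r false = false) :
    ∀ u v : ℕ → Bool, InfLt u v → InfLt (applyInf T u) (applyInf T v) := by
  rintro u v ⟨n, hagree, hlt⟩
  rw [Bool.lt_iff] at hlt
  obtain ⟨hun, hvn⟩ := hlt
  have hMeq : applyM T (pfx u n) = applyM T (pfx v n) := by
    unfold pfx applyM
    congr 2
    apply List.map_congr_left
    intro i hi
    exact hagree i (List.mem_range.mp hi)
  have hone : ∀ (x : ℕ → Bool) (c : Bool), x 0 = c →
      applyM T (pfx x 1) = T c := by
    intro x c hc
    have h0 : pfx x 1 = [x 0] := by simp [pfx, List.range_succ]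
    rw [h0, hc]; simp [applyM]
  have hu : applyInf T u = catInf (applyM T (pfx u n))
      (catInf (T false) (applyInf T (shiftW (shiftW u n) 1))) := by
    have e1 : applyM T (pfx (shiftW u n) 1) = T false :=
      hone (shiftW u n) false (by simp [shiftW, hun])
    rw [applyInf_split hA hB u n, applyInf_split hA hB (shiftW u n) 1, e1]
  have hv : applyInf T v = catInf (applyM T (pfx v n))
      (catInf (T true) (applyInf T (shiftW (shiftW v n) 1))) := by
    have e1 : applyM T (pfx (shiftW v n) 1) = T true :=
      hone (shiftW v n) true (by simp [shiftW, hvn])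
    rw [applyInf_split hA hB v n, applyInf_split hA hB (shiftW v n) 1, e1]
  set X := applyInf T (shiftW (shiftW u n) 1) with hXdef
  set Y := applyInf T (shiftW (shiftW v n) 1) with hYdef
  have hX : IsProd (T false) (T true) X := isProd_applyInf hA hB _
  have hY : IsProd (T false) (T true) Y := isProd_applyInf hA hB _
  have h1 : ∀ k ≤ r, catInf (T false) X k = (T false ++ T true).getD k false :=
    oneSide ((T false).length + (T true).length) (T false) (T true) le_rfl hA hB
      r hr1 hr2 X hX
  have h2 : ∀ k ≤ r, catInf (T true) Y k = (T true ++ T false).getD k false :=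
    oneSide ((T true).length + (T false).length) (T true) (T false) le_rfl hB hA
      r (fun k hk => (hr1 k hk).symm) (fun h => hr2 h.symm) Y (isProd_symm hY)
  have htail : InfLt (catInf (T false) X) (catInf (T true) Y) := by
    refine ⟨r, ?_, ?_⟩
    · intro i hi
      rw [h1 i (le_of_lt hi), h2 i (le_of_lt hi)]
      exact hr1 i hi
    · rw [h1 r le_rfl, h2 r le_rfl, hsign]
      have hT : (T true ++ T false).getD r false = true := by
        cases hcase : (T true ++ T false).getD r false
        · exact absurd (hsign.trans hcase.symm) hr2
        · rfl
      rw [hT]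
      exact Bool.false_lt_true
  rw [hu, hv, hMeq]
  exact catInf_prepend htail

lemma applyInf_flip (T : Bool → List Bool) (x : ℕ → Bool) :
    applyInf (fun c => T (!c)) (fun n => !(x n)) = applyInf T x := by
  funext k
  unfold applyInf applyM
  simp [List.map_map, Function.comp_def]

/-- An aperiodic binary morphism is order-preserving or
order-reversing on infinite words. -/
theorem stmt6 (T : Bool → List Bool) (hap : ¬ PeriodicM T) :
    (∀ u v : ℕ → Bool, InfLt u v → InfLt (applyInf T u) (applyInf T v)) ∨
    (∀ u v : ℕ → Bool, InfLt u v → InfLt (applyInf T v) (applyInf T u)) := by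
  have hA : T false ≠ [] := by
    intro h
    exact hap ⟨T true, 0, 1, by simp [wpow, h], by simp [wpow]⟩
  have hB : T true ≠ [] := by
    intro h
    exact hap ⟨T false, 1, 0, by simp [wpow], by simp [wpow, h]⟩
  have hcomm : T false ++ T true ≠ T true ++ T false := by
    intro h
    obtain ⟨t, i, j, h1, h2⟩ :=
      comm_wpow ((T false).length + (T true).length) (T false) (T true) le_rfl h
    exact hap ⟨t, i, j, h1, h2⟩
  have hex : ∃ r, (T false ++ T true).getD r false ≠ (T true ++ T false).getD r false := by
    by_contra hcon
    push_neg at hcon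
    apply hcomm
    apply List.ext_getElem (by simp; omega)
    intro n h1 h2
    have := hcon n
    rwa [List.getD_eq_getElem _ _ h1, List.getD_eq_getElem _ _ h2] at this
  classical
  set r := Nat.find hex with hrdef
  have hr2 : (T false ++ T true).getD r false ≠ (T true ++ T false).getD r false :=
    Nat.find_spec hex
  have hr1 : ∀ k < r, (T false ++ T true).getD k false = (T true ++ T false).getD k false :=
    fun k hk => not_not.mp (Nat.find_min hex hk)
  cases hsign : (T false ++ T true).getD r false with
  | false =>
    exact Or.inl (key T hA hB r hr1 hr2 hsign)
  | true =>
    right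
    intro u v huv
    set T' : Bool → List Bool := fun c => T (!c) with hT'
    have hA' : T' false ≠ [] := hB
    have hB' : T' true ≠ [] := hA
    have hr1' : ∀ k < r, (T' false ++ T' true).getD k false
        = (T' true ++ T' false).getD k false := by
      intro k hk
      exact (hr1 k hk).symm
    have hr2' : (T' false ++ T' true).getD r false ≠ (T' true ++ T' false).getD r false :=
      fun h => hr2 h.symm
    have hsign' : (T' false ++ T' true).getD r false = false := by
      show (T true ++ T false).getD r false = false
      cases hcase : (T true ++ T false).getD r false
      · rfl
      · exact absurd (hsign.trans hcase.symm) hr2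
    have hflip : InfLt (fun n => !(v n)) (fun n => !(u n)) := by
      obtain ⟨n, hag, hlt⟩ := huv
      rw [Bool.lt_iff] at hlt
      refine ⟨n, fun i hi => by simp only []; rw [hag i hi], ?_⟩
      show (!(v n)) < (!(u n))
      rw [hlt.1, hlt.2]
      exact Bool.false_lt_true
    have := key T' hA' hB' r hr1' hr2' hsign' _ _ hflip
    rwa [applyInf_flip T v, applyInf_flip T u] at this
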